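/- Let ε, δ ∈ (0,1) and let n be any positive integer such that g(n, n(1+ε)/(1+2ε)) − g(n, n(1+ε)) ≥ 1 − δ, where g(m, x) = e^{−x} ∑_{i=0}^{m−1} xⁱ/i!. Let X₁, …, Xₙ be i.i.d. exponential random variables with mean μ > 0, and define μ̂ = (∑_{i=1}^n Xᵢ)/n. Then Pr{ |μ̂ − μ| / μ < ε } ≥ 1 − δ. -/

import Mathlib

open MeasureTheory ProbabilityTheory Set

/-- `g m x = e^{-x} ∑_{i=0}^{m-1} x^i / i!`. -/
noncomputable def g (m : ℕ) (x : ℝ) : ℝ :=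
  Real.exp (-x) * ∑ i ∈ Finset.range m, x ^ i / (Nat.factorial i)


lemma hasDerivAt_S (m : ℕ) (x : ℝ) :
    HasDerivAt (fun y : ℝ => ∑ i ∈ Finset.range (m + 1), y ^ i / (Nat.factorial i))
      (∑ i ∈ Finset.range m, x ^ i / (Nat.factorial i)) x := by
  have h : HasDerivAt (fun y : ℝ => ∑ i ∈ Finset.range (m + 1), y ^ i / (Nat.factorial i))
      (∑ i ∈ Finset.range (m + 1), (i : ℝ) * x ^ (i - 1) / (Nat.factorial i)) x := by
    apply HasDerivAt.fun_sum
    intro i _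
    simpa [div_eq_mul_inv] using (hasDerivAt_pow i x).div_const (Nat.factorial i : ℝ)
  convert h using 1
  rw [Finset.sum_range_succ' (fun i => (i : ℝ) * x ^ (i - 1) / (Nat.factorial i))]
  simp [Nat.factorial_succ, mul_comm]
  refine Finset.sum_congr rfl fun i _ => ?_
  push_cast
  field_simp

lemma hasDerivAt_g (m : ℕ) (hm : 0 < m) (x : ℝ) :
    HasDerivAt (g m) (-(x ^ (m - 1) * Real.exp (-x) / (Nat.factorial (m - 1)))) x := by
  obtain ⟨k, rfl⟩ := Nat.exists_eq_add_of_lt hm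
  simp only [zero_add]
  have he : HasDerivAt (fun y : ℝ => Real.exp (-y)) (-Real.exp (-x)) x := by
    simpa using (HasDerivAt.exp (hasDerivAt_neg x))
  have h := he.mul (hasDerivAt_S k x)
  have : HasDerivAt (g (k + 1))
      (-Real.exp (-x) * ∑ i ∈ Finset.range (k + 1), x ^ i / (Nat.factorial i)
        + Real.exp (-x) * ∑ i ∈ Finset.range k, x ^ i / (Nat.factorial i)) x := h
  convert this using 1
  rw [Finset.sum_range_succ]
  simp
  ring

/-- continuous version of the gamma density -/
noncomputable def phi (m : ℕ) (r x : ℝ) : ℝ :=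
  r * ((r * x) ^ (m - 1) * Real.exp (-(r * x)) / (Nat.factorial (m - 1)))

lemma phi_cont (m : ℕ) (r : ℝ) : Continuous (phi m r) := by
  unfold phi; fun_prop

lemma phi_nonneg (m : ℕ) {r x : ℝ} (hr : 0 < r) (hx : 0 ≤ x) : 0 ≤ phi m r x := by
  unfold phi; positivity

lemma hasDerivAt_neg_g (m : ℕ) (hm : 0 < m) (r x : ℝ) :
    HasDerivAt (fun y => -g m (r * y)) (phi m r x) x := by
  have := ((hasDerivAt_g m hm (r * x)).comp x ((hasDerivAt_id x).const_mul r)).neg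
  exact this.congr_deriv (by unfold phi; ring)

lemma integral_phi (m : ℕ) (hm : 0 < m) (r a b : ℝ) :
    ∫ x in a..b, phi m r x = g m (r * a) - g m (r * b) := by
  have h := intervalIntegral.integral_eq_sub_of_hasDerivAt
    (f := fun y => -g m (r * y)) (f' := phi m r)
    (fun x _ => hasDerivAt_neg_g m hm r x)
    ((phi_cont m r).intervalIntegrable a b)
  rw [h]; ring

lemma g_zero (m : ℕ) (hm : 0 < m) : g m 0 = 1 := by
  obtain ⟨k, rfl⟩ := Nat.exists_eq_add_of_lt hm
  unfold g
  rw [Finset.sum_eq_single 0]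
  · simp
  · intro i _ hi
    simp [zero_pow hi]
  · simp

lemma g_succ (m : ℕ) (y : ℝ) : g (m + 1) y = g m y + Real.exp (-y) * y ^ m / (Nat.factorial m) := by
  unfold g
  rw [Finset.sum_range_succ]
  ring

lemma g_antitone (m : ℕ) (hm : 0 < m) {a b : ℝ} (ha : 0 ≤ a) (hab : a ≤ b) :
    g m b ≤ g m a := by
  have h := integral_phi m hm 1 a b
  simp only [one_mul] at h
  have hnn : 0 ≤ ∫ x in a..b, phi m 1 x := by
    apply intervalIntegral.integral_nonneg hab
    intro x hx
    exact phi_nonneg m one_pos (le_trans ha hx.1)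
  linarith

lemma gammaPDFReal_eq_phi (m : ℕ) (hm : 0 < m) {r : ℝ} (hr : 0 < r) {x : ℝ} (hx : 0 ≤ x) :
    gammaPDFReal m r x = phi m r x := by
  obtain ⟨k, rfl⟩ := Nat.exists_eq_add_of_lt hm
  rw [gammaPDFReal, if_pos hx]
  simp only [zero_add, Nat.add_sub_cancel, phi]
  have h1 : ((k + 1 : ℕ) : ℝ) - 1 = ((k : ℕ) : ℝ) := by push_cast; ring
  have h3 : ((k + 1 : ℕ) : ℝ) = (k : ℝ) + 1 := by push_cast; ring
  rw [h1, Real.rpow_natCast x k, h3, Real.Gamma_nat_eq_factorial, ← h3,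
    Real.rpow_natCast r (k + 1), mul_pow]
  ring

lemma setLIntegral_gammaPDF (m : ℕ) (hm : 0 < m) {r : ℝ} (hr : 0 < r) {s : Set ℝ}
    (hs : MeasurableSet s) (hsub : s ⊆ Ici 0) (hint : IntegrableOn (phi m r) s) :
    ∫⁻ x in s, gammaPDF m r x = ENNReal.ofReal (∫ x in s, phi m r x) := by
  rw [setLIntegral_congr_fun hs (fun x hx => by
    rw [gammaPDF, gammaPDFReal_eq_phi m hm hr (hsub hx)])]
  rw [← ofReal_integral_eq_lintegral_ofReal hint]
  exact (ae_restrict_iff' hs).mpr (ae_of_all _ (fun x hx => phi_nonneg m hr (hsub hx)))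

lemma gammaMeasure_Iic (m : ℕ) (hm : 0 < m) {r : ℝ} (hr : 0 < r) {t : ℝ} (ht : 0 ≤ t) :
    gammaMeasure m r (Iic t) = ENNReal.ofReal (1 - g m (r * t)) := by
  rw [gammaMeasure, withDensity_apply _ measurableSet_Iic,
    lintegral_Iic_eq_lintegral_Iio_add_Icc _ ht, lintegral_gammaPDF_of_nonpos le_rfl, zero_add,
    setLIntegral_gammaPDF m hm hr measurableSet_Icc (fun x hx => hx.1)
      ((phi_cont m r).integrableOn_Icc)]
  rw [MeasureTheory.integral_Icc_eq_integral_Ioc, ← intervalIntegral.integral_of_le ht,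
    integral_phi m hm, mul_zero, g_zero m hm]

lemma gammaMeasure_Iic_neg (m : ℕ) (r : ℝ) {t : ℝ} (ht : t < 0) :
    gammaMeasure m r (Iic t) = 0 := by
  rw [gammaMeasure, withDensity_apply _ measurableSet_Iic]
  have : ∫⁻ x in Iic t, gammaPDF m r x ≤ ∫⁻ x in Iio 0, gammaPDF m r x :=
    lintegral_mono_set (fun x hx => lt_of_le_of_lt hx ht)
  rw [lintegral_gammaPDF_of_nonpos le_rfl] at this
  exact le_antisymm this zero_le

lemma gammaMeasure_Ioo (m : ℕ) (hm : 0 < m) {r : ℝ} (hr : 0 < r) {a b : ℝ}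
    (ha : 0 ≤ a) (hab : a ≤ b) :
    gammaMeasure m r (Ioo a b) = ENNReal.ofReal (g m (r * a) - g m (r * b)) := by
  rw [gammaMeasure, withDensity_apply _ measurableSet_Ioo,
    setLIntegral_gammaPDF m hm hr measurableSet_Ioo (fun x hx => le_trans ha hx.1.le)
      (((phi_cont m r).integrableOn_Icc).mono_set Set.Ioo_subset_Icc_self)]
  rw [← MeasureTheory.integral_Ioc_eq_integral_Ioo, ← intervalIntegral.integral_of_le hab,
    integral_phi m hm]

lemma expMeasure_Iic {r : ℝ} (hr : 0 < r) (s : ℝ) :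
    expMeasure r (Iic s) = ENNReal.ofReal (if 0 ≤ s then 1 - Real.exp (-(r * s)) else 0) := by
  rcases le_or_gt 0 s with hs | hs
  · rw [if_pos hs, expMeasure, show (1:ℝ) = ((1:ℕ):ℝ) by norm_num,
      gammaMeasure_Iic 1 one_pos hr hs]
    congr 1
    unfold g
    simp
  · rw [if_neg (not_le.mpr hs), expMeasure, show (1:ℝ) = ((1:ℕ):ℝ) by norm_num,
      gammaMeasure_Iic_neg 1 r hs, ENNReal.ofReal_zero]

lemma conv_step (k : ℕ) (hk : 0 < k) {r : ℝ} (hr : 0 < r) :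
    Measure.map (fun p : ℝ × ℝ => p.1 + p.2) ((gammaMeasure k r).prod (expMeasure r))
      = gammaMeasure ((k + 1 : ℕ) : ℝ) r := by
  haveI : IsProbabilityMeasure (gammaMeasure (k:ℝ) r) :=
    isProbabilityMeasure_gammaMeasure (by exact_mod_cast hk) hr
  haveI : IsProbabilityMeasure (expMeasure r) := isProbabilityMeasure_expMeasure hr
  haveI : IsProbabilityMeasure
      (Measure.map (fun p : ℝ × ℝ => p.1 + p.2) ((gammaMeasure k r).prod (expMeasure r))) :=
    Measure.isProbabilityMeasure_map (by fun_prop)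
  refine Measure.ext_of_Iic _ _ (fun t => ?_)
  have hadd : Measurable (fun p : ℝ × ℝ => p.1 + p.2) := by fun_prop
  rw [Measure.map_apply hadd measurableSet_Iic,
    Measure.prod_apply (hadd measurableSet_Iic)]
  have hpre : ∀ x : ℝ, (Prod.mk x ⁻¹' ((fun p : ℝ × ℝ => p.1 + p.2) ⁻¹' Iic t)) = Iic (t - x) := by
    intro x; ext y; simp [le_sub_iff_add_le, add_comm]
  simp_rw [hpre, expMeasure_Iic hr]
  have hcmeas : Measurable (fun x : ℝ =>
      ENNReal.ofReal (if 0 ≤ t - x then 1 - Real.exp (-(r * (t - x))) else 0)) := by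
    apply Measurable.ennreal_ofReal
    exact Measurable.ite (measurableSet_le measurable_const (measurable_const.sub measurable_id))
      (by fun_prop) measurable_const
  have hpdfmeas : Measurable (gammaPDF (k:ℝ) r) := (measurable_gammaPDFReal _ _).ennreal_ofReal
  rw [gammaMeasure, lintegral_withDensity_eq_lintegral_mul _ hpdfmeas hcmeas]
  rcases lt_or_ge t 0 with ht | ht
  · have hzero : ∀ x : ℝ, (gammaPDF k r * fun x => ENNReal.ofReal (if 0 ≤ t - x then 1 - Real.exp (-(r * (t - x))) else 0)) x = 0 := by
      intro x
      rcases lt_or_ge x 0 with hx | hx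
      · simp [gammaPDF_of_neg hx]
      · have h0 : ¬ (0 ≤ t - x) := by simp; linarith
        rw [Pi.mul_apply, if_neg h0, ENNReal.ofReal_zero, mul_zero]
    simp only [hzero, lintegral_zero, gammaMeasure_Iic_neg (k+1) r ht]
  · -- main case
    set psi : ℝ → ℝ := fun x => phi k r x * (1 - Real.exp (-(r * (t - x)))) with hpsi
    have hind : (gammaPDF k r * fun x => ENNReal.ofReal (if 0 ≤ t - x then 1 - Real.exp (-(r * (t - x))) else 0))
        = (Icc 0 t).indicator (fun x => ENNReal.ofReal (psi x)) := by
      funext x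
      rcases lt_or_ge x 0 with hx | hx
      · rw [indicator_of_notMem (by simp [hx, not_le.mpr hx])]
        simp [gammaPDF_of_neg hx]
      · rcases le_or_gt x t with hxt | hxt
        · rw [indicator_of_mem (Set.mem_Icc.mpr ⟨hx, hxt⟩), Pi.mul_apply, gammaPDF,
            gammaPDFReal_eq_phi k hk hr hx]
          rw [if_pos (by linarith : (0:ℝ) ≤ t - x), ← ENNReal.ofReal_mul (phi_nonneg k hr hx)]
        · rw [indicator_of_notMem (by simp [not_le.mpr hxt])]
          have h0 : ¬ (0 ≤ t - x) := by simp; linarith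
          rw [Pi.mul_apply, if_neg h0, ENNReal.ofReal_zero, mul_zero]
    rw [hind, lintegral_indicator measurableSet_Icc]
    have hpsicont : Continuous psi := (phi_cont k r).mul (by fun_prop)
    have hpsiint : IntegrableOn psi (Icc 0 t) := hpsicont.integrableOn_Icc
    rw [← ofReal_integral_eq_lintegral_ofReal hpsiint
      ((ae_restrict_iff' measurableSet_Icc).mpr (ae_of_all _ (fun x hx => by
        apply mul_nonneg (phi_nonneg k hr hx.1)
        have h1 : 0 ≤ r * (t - x) := mul_nonneg hr.le (by linarith [hx.2])
        have h2 := Real.exp_le_one_iff.mpr (by linarith : -(r * (t-x)) ≤ 0)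
        linarith)))]
    obtain ⟨j, rfl⟩ : ∃ j, k = j + 1 := ⟨k - 1, (Nat.succ_pred_eq_of_pos hk).symm⟩
    have key : ∫ x in Icc 0 t, psi x = 1 - g (j + 1 + 1) (r * t) := by
      rw [MeasureTheory.integral_Icc_eq_integral_Ioc, ← intervalIntegral.integral_of_le ht]
      have hrmul : ∀ x : ℝ, HasDerivAt (fun y : ℝ => r * y) r x := fun x => by
        simpa using (hasDerivAt_id x).const_mul r
      have hF : ∀ x : ℝ, HasDerivAt
          (fun y => -g (j+1) (r * y) - (r * y) ^ (j+1) / (Nat.factorial (j+1))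
            * Real.exp (-(r * t))) (psi x) x := by
        intro x
        have hpow : HasDerivAt (fun y : ℝ => (r * y) ^ (j+1))
            (((j+1 : ℕ) : ℝ) * (r * x) ^ j * r) x := by
          have := (hasDerivAt_pow (j+1) (r*x)).comp x (hrmul x)
          exact this.congr_deriv (by simp)
        have h2 := ((hpow.div_const (Nat.factorial (j+1))).mul_const
          (Real.exp (-(r * t))))
        have h3 := (hasDerivAt_neg_g (j+1) (Nat.succ_pos j) r x).sub h2
        refine h3.congr_deriv ?_
        symm
        simp only [hpsi]
        unfold phi
        simp only [Nat.add_sub_cancel]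
        have hexp : Real.exp (-(r * x)) * Real.exp (-(r * (t - x))) = Real.exp (-(r * t)) := by
          rw [← Real.exp_add]; ring_nf
        have hred : ((j+1 : ℕ) : ℝ) * (r*x)^j * r / (Nat.factorial (j+1))
            = r * (r*x)^j / (Nat.factorial j) := by
          rw [Nat.factorial_succ]
          have h1 : (0:ℝ) < (Nat.factorial j : ℝ) := by positivity
          push_cast
          field_simp
        rw [hred, ← hexp]
        ring
      rw [intervalIntegral.integral_eq_sub_of_hasDerivAt (fun x _ => hF x)
        (hpsicont.intervalIntegrable 0 t)]
      rw [mul_zero, g_zero (j+1) (Nat.succ_pos j), g_succ (j+1), zero_pow (Nat.succ_ne_zero j)]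
      ring
    rw [key, gammaMeasure_Iic (j+1+1) (Nat.succ_pos _) hr ht]

lemma map_sum_eq_gamma {Ω : Type*} [MeasureSpace Ω] [IsProbabilityMeasure (ℙ : Measure Ω)]
    {n : ℕ} {r : ℝ} (hr : 0 < r)
    (X : Fin n → Ω → ℝ) (hmeas : ∀ i, Measurable (X i))
    (hindep : iIndepFun X ℙ)
    (hdist : ∀ i, Measure.map (X i) ℙ = expMeasure r) :
    ∀ (s : Finset (Fin n)), s.Nonempty →
      Measure.map (fun ω => ∑ i ∈ s, X i ω) ℙ = gammaMeasure ((s.card : ℕ) : ℝ) r := by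
  intro s hs
  induction hs using Finset.Nonempty.cons_induction with
  | singleton a =>
    have : (fun ω => ∑ i ∈ ({a} : Finset (Fin n)), X i ω) = X a := by
      funext ω; exact Finset.sum_singleton _ _
    rw [this, hdist a, expMeasure]
    norm_num
  | cons a s ha hs ih =>
    have hSmeas : Measurable (fun ω => ∑ i ∈ s, X i ω) := by
      apply Finset.measurable_sum
      exact fun i _ => hmeas i
    have hIndep : IndepFun (fun ω => ∑ i ∈ s, X i ω) (X a) ℙ := by
      have := hindep.indepFun_finsetSum_of_notMem hmeas ha
      have heq : (∑ i ∈ s, X i) = (fun ω => ∑ i ∈ s, X i ω) := by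
        funext ω; exact Finset.sum_apply ω s X
      rwa [heq] at this
    have hpair := (indepFun_iff_map_prod_eq_prod_map_map hSmeas.aemeasurable
      (hmeas a).aemeasurable).mp hIndep
    have hsum : (fun ω => ∑ i ∈ Finset.cons a s ha, X i ω)
        = (fun p : ℝ × ℝ => p.1 + p.2) ∘ (fun ω => ((∑ i ∈ s, X i ω), X a ω)) := by
      funext ω
      simp only [Finset.sum_cons, Function.comp_apply]
      exact add_comm _ _
    rw [hsum, ← Measure.map_map (by fun_prop) (hSmeas.prodMk (hmeas a)), hpair, ih, hdist a,
      conv_step s.card hs.card_pos hr, Finset.card_cons]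

/-- If `ε, δ ∈ (0,1)`, `n ≥ 1` satisfies `g(n, n(1+ε)/(1+2ε)) - g(n, n(1+ε)) ≥ 1 - δ`, and
`X₁, …, Xₙ` are i.i.d. exponential with mean `μ > 0` with `μ̂ = (∑ Xᵢ)/n`, then
`Pr{|μ̂ - μ|/μ < ε} ≥ 1 - δ`. -/
theorem service_time_sample_size
    {Ω : Type*} [MeasureSpace Ω] [IsProbabilityMeasure (ℙ : Measure Ω)]
    (ε δ : ℝ) (hε : ε ∈ Set.Ioo (0 : ℝ) 1) (hδ : δ ∈ Set.Ioo (0 : ℝ) 1)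
    (n : ℕ) (hn : 0 < n)
    (hsize : g n ((n : ℝ) * (1 + ε) / (1 + 2 * ε)) - g n ((n : ℝ) * (1 + ε)) ≥ 1 - δ)
    (μ : ℝ) (hμ : 0 < μ)
    (X : Fin n → Ω → ℝ) (hmeas : ∀ i, Measurable (X i))
    (hindep : iIndepFun X ℙ)
    (hdist : ∀ i, Measure.map (X i) ℙ = expMeasure (1 / μ)) :
    (ℙ {ω | |(∑ i, X i ω) / n - μ| / μ < ε}).toReal ≥ 1 - δ := by
  obtain ⟨hε0, hε1⟩ := hε
  obtain ⟨hδ0, hδ1⟩ := hδ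
  have hn' : (0 : ℝ) < n := Nat.cast_pos.mpr hn
  have hr : (0 : ℝ) < 1 / μ := by positivity
  haveI : Nonempty (Fin n) := ⟨⟨0, hn⟩⟩
  have hmap := map_sum_eq_gamma hr X hmeas hindep hdist Finset.univ Finset.univ_nonempty
  rw [Finset.card_univ, Fintype.card_fin] at hmap
  set a : ℝ := (n : ℝ) * μ * (1 - ε) with hadef
  set b : ℝ := (n : ℝ) * μ * (1 + ε) with hbdef
  have hset : {ω | |(∑ i, X i ω) / n - μ| / μ < ε}
      = (fun ω => ∑ i, X i ω) ⁻¹' (Ioo a b) := by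
    ext ω
    simp only [Set.mem_setOf_eq, Set.mem_preimage, Set.mem_Ioo]
    rw [div_lt_iff₀ hμ, abs_lt]
    have hxn : (∑ i, X i ω) / n * n = ∑ i, X i ω := div_mul_cancel₀ _ (ne_of_gt hn')
    constructor
    · rintro ⟨h1, h2⟩
      constructor <;> nlinarith [hxn, hn']
    · rintro ⟨h1, h2⟩
      constructor <;> [nlinarith [hxn, hn']; nlinarith [hxn, hn']]
  have hSmeas : Measurable (fun ω : Ω => ∑ i, X i ω) :=
    Finset.measurable_sum _ (fun i _ => hmeas i)
  have hnμ : (0:ℝ) < (n:ℝ) * μ := mul_pos hn' hμ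
  have ha0 : 0 ≤ a := by nlinarith
  have hab : a ≤ b := by nlinarith
  rw [hset, ← Measure.map_apply hSmeas measurableSet_Ioo, hmap,
    gammaMeasure_Ioo n hn hr ha0 hab]
  have hra : 1 / μ * a = (n : ℝ) * (1 - ε) := by
    rw [hadef]; field_simp
  have hrb : 1 / μ * b = (n : ℝ) * (1 + ε) := by
    rw [hbdef]; field_simp
  rw [hra, hrb]
  have hmono : g n ((n : ℝ) * (1 + ε) / (1 + 2 * ε)) ≤ g n ((n : ℝ) * (1 - ε)) := by
    apply g_antitone n hn (by nlinarith)
    rw [le_div_iff₀ (by linarith : (0:ℝ) < 1 + 2 * ε)]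
    nlinarith [mul_nonneg hn'.le (sq_nonneg ε)]
  have hD : 1 - δ ≤ g n ((n : ℝ) * (1 - ε)) - g n ((n : ℝ) * (1 + ε)) := by linarith
  rw [ENNReal.toReal_ofReal (by linarith)]
  linarith
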